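/- Let G and G′ be two infinite groups. Suppose G has a strong Remak decomposition H = H₁ × ⋯ × H_p that is unique up to equivalence (every strong Remak decomposition of G is equivalent to it), and G′ has a strong Remak decomposition H′ = H′₁ × ⋯ × H′_q that is unique up to equivalence. Then G and G′ are commensurable if and only if p = q and, up to a permutation of the factors, Hᵢ and H′ᵢ are commensurable for every i ∈ {1,…,p}. -/

import Mathlib

namespace ArtinPaper

variable {B : Type*}

/-- The word `Π(s,t,m) = sts⋯` (`m` letters, starting with `s`), as an element of the
free group on `B`. -/
def piWord (s t : B) (m : ℕ) : FreeGroup B :=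
  ((CoxeterSystem.alternatingWord t s m).map FreeGroup.of).prod

/-- The braid relators `Π(s,t,m_{s,t}) Π(t,s,m_{s,t})⁻¹` of a Coxeter matrix (the entry `0`
plays the role of `∞`, in which case the relator is trivial). -/
def artinRelationsSet (M : CoxeterMatrix B) : Set (FreeGroup B) :=
  { r | ∃ s t : B, r = piWord s t (M s t) * (piWord t s (M s t))⁻¹ }

/-- The Artin group `A[Γ]` of a Coxeter graph `Γ` (encoded by its Coxeter matrix `M`). -/
abbrev ArtinGroup (M : CoxeterMatrix B) : Type _ :=
  PresentedGroup (artinRelationsSet M)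

/-- The standard generators of the Artin group. -/
def ArtinGroup.of (M : CoxeterMatrix B) (s : B) : ArtinGroup M :=
  PresentedGroup.of s

/-- The normal subgroup of `A[Γ]` generated by the squares of the standard generators. -/
def squaresClosure (M : CoxeterMatrix B) : Subgroup (ArtinGroup M) :=
  Subgroup.normalClosure { x | ∃ s : B, x = (ArtinGroup.of M s) ^ 2 }

instance squaresClosure_normal (M : CoxeterMatrix B) : (squaresClosure M).Normal :=
  Subgroup.normalClosure_normal

/-- The Coxeter group `W[Γ]`, realized as the quotient of `A[Γ]` by the relations `s² = 1`. -/
abbrev CoxeterQuot (M : CoxeterMatrix B) : Type _ :=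
  ArtinGroup M ⧸ squaresClosure M

/-- The canonical projection `θ : A[Γ] → W[Γ]`. -/
def artinToCoxeter (M : CoxeterMatrix B) : ArtinGroup M →* CoxeterQuot M :=
  QuotientGroup.mk' (squaresClosure M)

/-- `Γ` has spherical type if its Coxeter group is finite. -/
def IsSpherical (M : CoxeterMatrix B) : Prop :=
  Finite (CoxeterQuot M)

/-- The pure Artin group `CA[Γ] = Ker θ`. -/
def CA (M : CoxeterMatrix B) : Subgroup (ArtinGroup M) :=
  (artinToCoxeter M).ker

/-- `⎯CA[Γ] = CA[Γ]/Z(CA[Γ])`. -/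
abbrev CAbar (M : CoxeterMatrix B) : Type _ :=
  ↥(CA M) ⧸ Subgroup.center ↥(CA M)

/-- `⎯A[Γ] = A[Γ]/Z(A[Γ])`. -/
abbrev Abar (M : CoxeterMatrix B) : Type _ :=
  ArtinGroup M ⧸ Subgroup.center (ArtinGroup M)

/-- The Coxeter graph of `M`: vertices `B`, an edge between `s ≠ t` whenever `m_{s,t} ≥ 3`
(where the entry `0` denotes `∞`, hence also gives an edge). -/
def coxeterGraph (M : CoxeterMatrix B) : SimpleGraph B where
  Adj s t := s ≠ t ∧ (M s t = 0 ∨ 3 ≤ M s t)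
  symm := ⟨fun s t h => ⟨h.1.symm, by rw [M.symmetric t s]; exact h.2⟩⟩
  loopless := ⟨fun s h => h.1 rfl⟩

/-- The restriction of a Coxeter matrix to a set of vertices (an induced subgraph). -/
def restrictMatrix (M : CoxeterMatrix B) (P : Set B) : CoxeterMatrix P where
  M := Matrix.of fun s t => M s.1 t.1
  isSymm := Matrix.IsSymm.ext fun s t => M.symmetric t.1 s.1
  diagonal s := M.diagonal s.1
  off_diagonal s t h := M.off_diagonal s.1 t.1 fun h' => h (Subtype.ext h')

/-- Two groups are (abstractly) commensurable if they have isomorphic finite index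
subgroups. -/
def AbsCommensurable (G H : Type*) [Group G] [Group H] : Prop :=
  ∃ (G₀ : Subgroup G) (H₀ : Subgroup H),
    G₀.FiniteIndex ∧ H₀.FiniteIndex ∧ Nonempty (G₀ ≃* H₀)

/-- `G = H × K` as an internal direct product of two of its subgroups. -/
def IsInternalProduct {G : Type*} [Group G] (H K : Subgroup G) : Prop :=
  H.Normal ∧ K.Normal ∧ H ⊓ K = ⊥ ∧ H ⊔ K = ⊤

/-- `G = H₁ × ⋯ × H_m` as an internal direct product of a family of subgroups. -/
def IsInternalProductFamily {G : Type*} [Group G] {ι : Type*} (H : ι → Subgroup G) : Prop :=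
  (∀ i, (H i).Normal) ∧ iSupIndep H ∧ (⨆ i, H i) = ⊤

/-- A group is indecomposable if it admits no internal direct product decomposition with
both factors nontrivial. -/
def Indecomposable (G : Type*) [Group G] : Prop :=
  ∀ H K : Subgroup G, IsInternalProduct H K → H = ⊥ ∨ K = ⊥

/-- A group is strongly indecomposable if it is infinite and all of its finite index
subgroups are indecomposable. -/
def StronglyIndecomposable (G : Type*) [Group G] : Prop :=
  Infinite G ∧ ∀ U : Subgroup G, U.FiniteIndex → Indecomposable ↥U

/-- A strong Remak decomposition of `G`: a finite index subgroup `H` together with an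
internal direct product decomposition of `H` into strongly indecomposable factors. -/
structure StrongRemakDecomposition (G : Type*) [Group G] (m : ℕ) where
  H : Subgroup G
  finiteIndex : H.FiniteIndex
  factor : Fin m → Subgroup ↥H
  internal : IsInternalProductFamily factor
  strong : ∀ i, StronglyIndecomposable ↥(factor i)

/-- Equivalence of strong Remak decompositions: same number of factors and, up to a
permutation of the indices, commensurable factors. -/
def RemakEquiv {G G' : Type*} [Group G] [Group G'] {m n : ℕ}
    (D : StrongRemakDecomposition G m) (D' : StrongRemakDecomposition G' n) : Prop :=
  ∃ σ : Fin m ≃ Fin n, ∀ i, AbsCommensurable ↥(D.factor i) ↥(D'.factor (σ i))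

/-- A group has generalized torsion if it contains a nontrivial element `α` such that some
nonempty product of conjugates of `α` is trivial. -/
def HasGeneralizedTorsion (G : Type*) [Group G] : Prop :=
  ∃ α : G, α ≠ 1 ∧ ∃ βs : List G, βs ≠ [] ∧ (βs.map fun β => β * α * β⁻¹).prod = 1


section AuxLemmas

/-- `Equiv.piCongrLeft'` as a `MulEquiv`. -/
def mulEquivPiCongrLeft' {ι κ : Type*} (M : ι → Type*) [∀ i, Group (M i)] (e : ι ≃ κ) :
    (∀ i, M i) ≃* ∀ k, M (e.symm k) :=
  { Equiv.piCongrLeft' M e with map_mul' := fun _ _ => rfl }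

/-- The subgroup `Π A i` of `Π G i` is isomorphic to the direct product of the `A i`. -/
def subgroupPiEquiv {ι : Type*} {G : ι → Type*} [∀ i, Group (G i)] (A : ∀ i, Subgroup (G i)) :
    ↥(Subgroup.pi Set.univ A) ≃* ∀ i, ↥(A i) where
  toFun x := fun i => ⟨x.1 i, x.2 i (Set.mem_univ i)⟩
  invFun f := ⟨fun i => f i, fun i _ => (f i).2⟩
  left_inv _ := rfl
  right_inv _ := rfl
  map_mul' _ _ := rfl

theorem index_pi' {ι : Type*} [Fintype ι] {f : ι → Type*} [∀ i, Group (f i)]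
    (H : ∀ i, Subgroup (f i)) :
    (Subgroup.pi Set.univ H).index = ∏ i, (H i).index := by
  simp_rw [Subgroup.index, ← Nat.card_pi]
  refine Nat.card_congr
    ((Quotient.congrRight (fun x y ↦ ?_)).trans (Setoid.piQuotientEquiv _).symm)
  rw [QuotientGroup.leftRel_pi]

theorem AbsCommensurable.symm {G H : Type*} [Group G] [Group H] (h : AbsCommensurable G H) :
    AbsCommensurable H G := by
  obtain ⟨A, B, hA, hB, ⟨e⟩⟩ := h
  exact ⟨B, A, hB, hA, ⟨e.symm⟩⟩

theorem absCommensurable_of_mulEquiv {G H : Type*} [Group G] [Group H] (e : G ≃* H) :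
    AbsCommensurable G H :=
  ⟨⊤, ⊤, inferInstance, inferInstance,
    ⟨(Subgroup.topEquiv.trans e).trans Subgroup.topEquiv.symm⟩⟩

theorem absCommensurable_subgroup {G : Type*} [Group G] (K : Subgroup G) (hK : K.FiniteIndex) :
    AbsCommensurable ↥K G :=
  ⟨⊤, K, inferInstance, hK, ⟨Subgroup.topEquiv⟩⟩

theorem finiteIndex_map_equiv {G H : Type*} [Group G] [Group H] (e : G ≃* H) (K : Subgroup G)
    (hK : K.FiniteIndex) : (K.map e.toMonoidHom).FiniteIndex := by
  constructor
  rw [Subgroup.index_map_of_injective _ e.injective,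
    MonoidHom.range_eq_top.mpr e.surjective, Subgroup.index_top, mul_one]
  exact hK.index_ne_zero

theorem finiteIndex_map_subtype' {G : Type*} [Group G] (K : Subgroup G) (hK : K.FiniteIndex)
    (L : Subgroup ↥K) (hL : L.FiniteIndex) : (L.map K.subtype).FiniteIndex := by
  constructor
  rw [Subgroup.index_map_subtype]
  exact mul_ne_zero hL.index_ne_zero hK.index_ne_zero

theorem AbsCommensurable.trans {G₁ G₂ G₃ : Type*} [Group G₁] [Group G₂] [Group G₃]
    (h₁ : AbsCommensurable G₁ G₂) (h₂ : AbsCommensurable G₂ G₃) : AbsCommensurable G₁ G₃ := by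
  obtain ⟨A, B, hA, hB, ⟨e⟩⟩ := h₁
  obtain ⟨C, E, hC, hE, ⟨f⟩⟩ := h₂
  haveI := hB; haveI := hC
  haveI hS : ((B ⊓ C).subgroupOf B).FiniteIndex := inferInstance
  haveI hT : ((B ⊓ C).subgroupOf C).FiniteIndex := inferInstance
  refine ⟨(((B ⊓ C).subgroupOf B).map e.symm.toMonoidHom).map A.subtype,
    (((B ⊓ C).subgroupOf C).map f.toMonoidHom).map E.subtype,
    finiteIndex_map_subtype' A hA _ (finiteIndex_map_equiv e.symm _ hS),
    finiteIndex_map_subtype' E hE _ (finiteIndex_map_equiv f _ hT), ⟨?_⟩⟩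
  exact ((Subgroup.equivMapOfInjective _ A.subtype A.subtype_injective).symm.trans
    ((MulEquiv.subgroupMap e.symm ((B ⊓ C).subgroupOf B)).symm.trans
    ((Subgroup.subgroupOfEquivOfLe inf_le_left).trans
    ((Subgroup.subgroupOfEquivOfLe inf_le_right).symm.trans
    ((MulEquiv.subgroupMap f ((B ⊓ C).subgroupOf C)).trans
    (Subgroup.equivMapOfInjective _ E.subtype E.subtype_injective))))))

theorem Indecomposable.of_mulEquiv {G G' : Type*} [Group G] [Group G'] (e : G ≃* G')
    (h : Indecomposable G) : Indecomposable G' := by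
  rintro H K ⟨hHn, hKn, hinf, hsup⟩
  have key : IsInternalProduct (H.map e.symm.toMonoidHom) (K.map e.symm.toMonoidHom) := by
    refine ⟨hHn.map _ e.symm.surjective, hKn.map _ e.symm.surjective, ?_, ?_⟩
    · rw [← Subgroup.map_inf _ _ _ e.symm.injective, hinf, Subgroup.map_bot]
    · rw [← Subgroup.map_sup, hsup, Subgroup.map_top_of_surjective _ e.symm.surjective]
  rcases h _ _ key with h' | h'
  · exact Or.inl (Subgroup.map_injective e.symm.injective
      (h'.trans (Subgroup.map_bot e.symm.toMonoidHom).symm))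
  · exact Or.inr (Subgroup.map_injective e.symm.injective
      (h'.trans (Subgroup.map_bot e.symm.toMonoidHom).symm))

theorem StronglyIndecomposable.of_mulEquiv {G G' : Type*} [Group G] [Group G'] (e : G ≃* G')
    (h : StronglyIndecomposable G) : StronglyIndecomposable G' := by
  refine ⟨?_, fun U hU => ?_⟩
  · haveI := h.1
    exact e.toEquiv.infinite_iff.mp h.1
  · have hV : (U.map e.symm.toMonoidHom).FiniteIndex := finiteIndex_map_equiv e.symm U hU
    exact Indecomposable.of_mulEquiv (MulEquiv.subgroupMap e.symm U).symm (h.2 _ hV)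

theorem StronglyIndecomposable.subgroup {G : Type*} [Group G] (h : StronglyIndecomposable G)
    (K : Subgroup G) (hK : K.FiniteIndex) : StronglyIndecomposable ↥K := by
  haveI := h.1
  refine ⟨?_, fun U hU => ?_⟩
  · by_contra hfin
    haveI : Finite ↥K := not_infinite_iff_finite.mp hfin
    have hc := K.card_mul_index
    rw [Nat.card_eq_zero_of_infinite (α := G)] at hc
    rcases Nat.mul_eq_zero.mp hc with h0 | h0
    · exact Nat.card_pos.ne' h0
    · exact hK.index_ne_zero h0
  · exact Indecomposable.of_mulEquiv
      (Subgroup.equivMapOfInjective U K.subtype K.subtype_injective).symm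
      (h.2 _ (finiteIndex_map_subtype' K hK U hU))

variable {ι : Type*} {G : Type*} [Group G]

theorem IsInternalProductFamily.commute {H : ι → Subgroup G}
    (h : IsInternalProductFamily H) :
    Pairwise fun i j => ∀ x y : G, x ∈ H i → y ∈ H j → Commute x y :=
  fun i j hij x y hx hy =>
    Subgroup.commute_of_normal_of_disjoint _ _ (h.1 i) (h.1 j)
      (h.2.1.pairwiseDisjoint hij) x y hx hy

/-- The group isomorphism `Π Hᵢ ≃* G` underlying an internal direct product decomposition. -/
noncomputable def IsInternalProductFamily.mulEquiv [Fintype ι] {H : ι → Subgroup G}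
    (h : IsInternalProductFamily H) : (∀ i, ↥(H i)) ≃* G :=
  MulEquiv.ofBijective (Subgroup.noncommPiCoprod h.commute)
    ⟨Subgroup.injective_noncommPiCoprod_of_iSupIndep h.2.1,
     MonoidHom.range_eq_top.mp (by rw [Subgroup.noncommPiCoprod_range, h.2.2])⟩

theorem IsInternalProductFamily.mulEquiv_mulSingle [Fintype ι] [DecidableEq ι]
    {H : ι → Subgroup G} (h : IsInternalProductFamily H) (i : ι) (y : ↥(H i)) :
    h.mulEquiv (Pi.mulSingle i y) = y :=
  Subgroup.noncommPiCoprod_mulSingle (hcomm := h.commute) i y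

theorem IsInternalProductFamily.mulEquiv_mem [Fintype ι] {H : ι → Subgroup G}
    (h : IsInternalProductFamily H) {K : Subgroup G} (u : ∀ i, ↥(H i))
    (hu : ∀ i, (u i : G) ∈ K) : h.mulEquiv u ∈ K := by
  rw [show h.mulEquiv u = Subgroup.noncommPiCoprod h.commute u from rfl,
    Subgroup.noncommPiCoprod_apply]
  exact K.noncommProd_mem _ fun i _ => hu i

theorem isInternalProductFamily_subgroupOf {N : Subgroup G} {H : ι → Subgroup G}
    (hle : ∀ i, H i ≤ N) (hnorm : ∀ i, N ≤ Subgroup.normalizer ((H i : Subgroup G) : Set G)) (hind : iSupIndep H)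
    (hsup : (⨆ i, H i) = N) :
    IsInternalProductFamily fun i => (H i).subgroupOf N := by
  have hinj := Subgroup.map_injective N.subtype_injective
  have hmap : ∀ i, ((H i).subgroupOf N).map N.subtype = H i := fun i => by
    rw [Subgroup.subgroupOf_map_subtype, inf_eq_left.mpr (hle i)]
  refine ⟨fun i => ?_, fun i => ?_, ?_⟩
  · constructor
    intro n hn g
    rw [Subgroup.mem_subgroupOf] at hn ⊢
    simpa using (Subgroup.mem_normalizer_iff.mp (hnorm i g.2) ↑n).mp hn
  · rw [disjoint_iff]
    apply hinj
    rw [Subgroup.map_inf _ _ _ N.subtype_injective, Subgroup.map_bot]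
    simp only [Subgroup.map_iSup, hmap]
    exact disjoint_iff.mp (hind i)
  · apply hinj
    simp only [Subgroup.map_iSup, hmap, hsup]
    rw [← MonoidHom.range_eq_map, N.range_subtype]

theorem IsInternalProductFamily.map_mulEquiv {G' : Type*} [Group G'] {H : ι → Subgroup G}
    (h : IsInternalProductFamily H) (e : G ≃* G') :
    IsInternalProductFamily fun i => (H i).map e.toMonoidHom := by
  refine ⟨fun i => (h.1 i).map _ e.surjective, fun i => ?_, ?_⟩
  · rw [disjoint_iff]
    simp only [← Subgroup.map_iSup]
    rw [← Subgroup.map_inf _ _ e.toMonoidHom e.injective, disjoint_iff.mp (h.2.1 i),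
      Subgroup.map_bot]
  · simp only [← Subgroup.map_iSup]
    rw [h.2.2, Subgroup.map_top_of_surjective _ e.surjective]

end AuxLemmas

/-- If `G` and `G'` are infinite groups, each having a strong Remak
decomposition that is unique up to equivalence, then `G` and `G'` are commensurable if and
only if the two decompositions have the same number of factors and, up to a permutation of
the indices, commensurable factors. -/
theorem absCommensurable_iff_remakEquiv {G G' : Type*} [Group G] [Group G']
    [Infinite G] [Infinite G'] {p q : ℕ}
    (D : StrongRemakDecomposition G p) (D' : StrongRemakDecomposition G' q)
    (hD : ∀ (m : ℕ) (E : StrongRemakDecomposition G m), RemakEquiv E D)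
    (hD' : ∀ (n : ℕ) (E : StrongRemakDecomposition G' n), RemakEquiv E D') :
    AbsCommensurable G G' ↔
      ∃ σ : Fin p ≃ Fin q, ∀ i, AbsCommensurable ↥(D.factor i) ↥(D'.factor (σ i)) := by
  constructor
  · rintro ⟨G₀, H₀, hG₀, hH₀, ⟨φ⟩⟩
    haveI := hG₀; haveI := hH₀; haveI := D.finiteIndex
    set K : Subgroup ↥D.H := G₀.subgroupOf D.H with hK
    haveI hKfi : K.FiniteIndex := Subgroup.instFiniteIndex_subgroupOf G₀ D.H
    set C : ∀ i, Subgroup ↥(D.factor i) := fun i => K.subgroupOf (D.factor i) with hC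
    haveI hCfi : ∀ i, (C i).FiniteIndex := fun i => Subgroup.instFiniteIndex_subgroupOf _ _
    set F : Fin p → Subgroup ↥D.H := fun i => (C i).map (D.factor i).subtype with hF
    have hFeq : ∀ i, F i = K ⊓ D.factor i := fun i => by
      rw [hF]; exact Subgroup.subgroupOf_map_subtype _ _
    have hFle : ∀ i, F i ≤ D.factor i := fun i => by rw [hFeq]; exact inf_le_right
    have hFK : ∀ i, F i ≤ K := fun i => by rw [hFeq]; exact inf_le_left
    have hFind : iSupIndep F := D.internal.2.1.mono hFle
    set N : Subgroup ↥D.H := ⨆ i, F i with hN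
    have hFN : ∀ i, F i ≤ N := fun i => le_iSup F i
    have hFNorm : ∀ i, N ≤ Subgroup.normalizer ((F i : Subgroup ↥D.H) : Set ↥D.H) := by
      intro i
      rw [hN]
      refine iSup_le fun j => ?_
      rcases eq_or_ne j i with rfl | hij
      · exact Subgroup.le_normalizer
      · intro x hx
        have hcomm : ∀ y ∈ F i, Commute x y := fun y hy =>
          Subgroup.commute_of_normal_of_disjoint _ _ (D.internal.1 j) (D.internal.1 i)
            (D.internal.2.1.pairwiseDisjoint hij) x y (hFle j hx) (hFle i hy)
        rw [Subgroup.mem_normalizer_iff]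
        intro h
        constructor
        · intro hh
          have key : x * h * x⁻¹ = h := by rw [(hcomm h hh).eq, mul_inv_cancel_right]
          rwa [key]
        · intro hh
          have key : x * h * x⁻¹ = h := by
            have h2 : x * (x * h * x⁻¹) = (x * h * x⁻¹) * x := (hcomm _ hh).eq
            have h3 : (x * h * x⁻¹) * x = x * h := by group
            exact mul_left_cancel (h2.trans h3)
          rwa [key] at hh
    set ψ := D.internal.mulEquiv with hψ
    have hNeq : N = (Subgroup.pi Set.univ C).map ψ.toMonoidHom := by
      apply le_antisymm
      · rw [hN]
        refine iSup_le fun i => ?_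
        rintro x hx
        rw [hF] at hx
        obtain ⟨c, hc, rfl⟩ := hx
        refine ⟨Pi.mulSingle i c, ?_, D.internal.mulEquiv_mulSingle i c⟩
        rw [SetLike.mem_coe, Subgroup.mem_pi]
        intro j _
        rcases eq_or_ne j i with rfl | hij
        · simpa using hc
        · rw [Pi.mulSingle_eq_of_ne hij]
          exact (C j).one_mem
      · rintro x ⟨u, hu, rfl⟩
        rw [SetLike.mem_coe, Subgroup.mem_pi] at hu
        exact D.internal.mulEquiv_mem u fun i =>
          hFN i (by rw [hF]; exact ⟨u i, hu i (Set.mem_univ i), rfl⟩)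
    haveI hNfi : N.FiniteIndex := by
      rw [hNeq]
      exact finiteIndex_map_equiv ψ _
        ⟨by rw [index_pi']
            exact Finset.prod_ne_zero_iff.mpr fun i _ => (hCfi i).index_ne_zero⟩
    have hNK : N ≤ K := by rw [hN]; exact iSup_le hFK
    set M : Subgroup G := N.map D.H.subtype with hM
    haveI hMfi : M.FiniteIndex := finiteIndex_map_subtype' D.H D.finiteIndex N hNfi
    have hMG₀ : M ≤ G₀ := by
      rw [hM]
      calc N.map D.H.subtype ≤ (G₀.subgroupOf D.H).map D.H.subtype :=
            Subgroup.map_mono hNK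
        _ ≤ G₀ := by rw [Subgroup.subgroupOf_map_subtype]; exact inf_le_left
    haveI hM₀fi : (M.subgroupOf G₀).FiniteIndex := Subgroup.instFiniteIndex_subgroupOf _ _
    set M' : Subgroup ↥H₀ := (M.subgroupOf G₀).map φ.toMonoidHom with hM'
    haveI hM'fi : M'.FiniteIndex := finiteIndex_map_equiv φ _ hM₀fi
    set M'' : Subgroup G' := M'.map H₀.subtype with hM''
    haveI hM''fi : M''.FiniteIndex := finiteIndex_map_subtype' H₀ hH₀ _ hM'fi
    let χ : ↥N ≃* ↥M'' :=
      (Subgroup.equivMapOfInjective N D.H.subtype D.H.subtype_injective).trans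
        ((Subgroup.subgroupOfEquivOfLe hMG₀).symm.trans
          ((MulEquiv.subgroupMap φ (M.subgroupOf G₀)).trans
            (Subgroup.equivMapOfInjective M' H₀.subtype H₀.subtype_injective)))
    have hint : IsInternalProductFamily fun i => (F i).subgroupOf N :=
      isInternalProductFamily_subgroupOf hFN hFNorm hFind hN.symm
    let E : StrongRemakDecomposition G' p :=
      { H := M''
        finiteIndex := hM''fi
        factor := fun i => ((F i).subgroupOf N).map χ.toMonoidHom
        internal := hint.map_mulEquiv χ
        strong := fun i => by
          have h1 : StronglyIndecomposable ↥(C i) := (D.strong i).subgroup _ (hCfi i)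
          have h2 : StronglyIndecomposable ↥(F i) :=
            h1.of_mulEquiv (Subgroup.equivMapOfInjective (C i) (D.factor i).subtype
              (D.factor i).subtype_injective)
          have h3 : StronglyIndecomposable ↥((F i).subgroupOf N) :=
            h2.of_mulEquiv (Subgroup.subgroupOfEquivOfLe (hFN i)).symm
          exact h3.of_mulEquiv (MulEquiv.subgroupMap χ _) }
    obtain ⟨σ, hσ⟩ := hD' p E
    refine ⟨σ, fun i => ?_⟩
    have c2 : ↥(C i) ≃* ↥(E.factor i) :=
      (Subgroup.equivMapOfInjective (C i) (D.factor i).subtype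
          (D.factor i).subtype_injective).trans
        ((Subgroup.subgroupOfEquivOfLe (hFN i)).symm.trans (MulEquiv.subgroupMap χ _))
    have e1 : AbsCommensurable ↥(D.factor i) ↥(E.factor i) :=
      (absCommensurable_subgroup _ (hCfi i)).symm.trans (absCommensurable_of_mulEquiv c2)
    exact e1.trans (hσ i)
  · rintro ⟨σ, hσ⟩
    choose A B hA hB e using fun i => hσ i
    let ψ := D.internal.mulEquiv
    let ψ' := D'.internal.mulEquiv
    let ρ : (∀ i, ↥(D'.factor (σ i))) ≃* ∀ j, ↥(D'.factor j) :=
      (mulEquivPiCongrLeft' (fun j => ↥(D'.factor j)) σ.symm).symm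
    haveI hAfi : (Subgroup.pi Set.univ A).FiniteIndex :=
      ⟨by rw [index_pi']
          exact Finset.prod_ne_zero_iff.mpr fun i _ => (hA i).index_ne_zero⟩
    haveI hBfi : (Subgroup.pi Set.univ B).FiniteIndex :=
      ⟨by rw [index_pi']
          exact Finset.prod_ne_zero_iff.mpr fun i _ => (hB i).index_ne_zero⟩
    refine ⟨((Subgroup.pi Set.univ A).map ψ.toMonoidHom).map D.H.subtype,
      (((Subgroup.pi Set.univ B).map ρ.toMonoidHom).map ψ'.toMonoidHom).map D'.H.subtype,
      finiteIndex_map_subtype' _ D.finiteIndex _ (finiteIndex_map_equiv ψ _ hAfi),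
      finiteIndex_map_subtype' _ D'.finiteIndex _
        (finiteIndex_map_equiv ψ' _ (finiteIndex_map_equiv ρ _ hBfi)), ⟨?_⟩⟩
    refine (Subgroup.equivMapOfInjective _ D.H.subtype D.H.subtype_injective).symm.trans ?_
    refine (MulEquiv.subgroupMap ψ _).symm.trans ?_
    refine (subgroupPiEquiv A).trans ?_
    refine (MulEquiv.piCongrRight fun i => (e i).some).trans ?_
    refine (subgroupPiEquiv B).symm.trans ?_
    refine (MulEquiv.subgroupMap ρ _).trans ?_
    refine (MulEquiv.subgroupMap ψ' _).trans ?_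
    exact Subgroup.equivMapOfInjective _ D'.H.subtype D'.H.subtype_injective

end ArtinPaper
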